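/- In the setting of the previous lemma (F'/F Galois of degree p² with all p+1 intermediate degree-p extensions having different exponent 2(p−1) at the restrictions of P', and e(P'|P) = p²), the ramification filtration of P'|P satisfies |G_0| = |G_1| = p² and G_2 = {id}; in particular d(P'|P) = 2(p²−1). -/

import Mathlib

lemma aux_zmul_card (p : ℕ) (hp : p.Prime) (x : ZMod p × ZMod p) (hx : x ≠ 0) :
    Nat.card (AddSubgroup.zmultiples x) = p := by
  haveI := Fact.mk hp
  rw [Nat.card_zmultiples]
  have h0 : p • x = 0 := by
    cases x with
    | mk a b => simp [Prod.ext_iff, nsmul_eq_mul, ZMod.natCast_self]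
  have hdvd : addOrderOf x ∣ p := addOrderOf_dvd_of_nsmul_eq_zero h0
  rcases (Nat.dvd_prime hp).mp hdvd with h | h
  · exact absurd (AddMonoid.addOrderOf_eq_one_iff.mp h) hx
  · exact h

/-- **Ramification filtration in the Artin–Schreier diamond.**
`F'/F` is Galois with group `G = Z/pZ × Z/pZ` and `P'` is a place of `F'` totally ramified
over the place `P` of `F` (so `e(P'|P) = p²`, i.e. `G₀ = G`).  The ramification filtration
`G i` of `P'|P` (in lower numbering) is a decreasing chain of subgroups, eventually trivial,
and Hilbert's different formula gives `d(P'|P) = ∑_{i ≥ 0} (|G i| − 1)`; for a nontrivial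
intermediate field `E = Fix(H)` (with `H` of order `p`), the ramification groups of `P'|Q`
are `G i ⊓ H`, and transitivity of the different reads
`d(P'|P) = e(P'|Q)·d(Q|P) + d(P'|Q)`.  If every one of the `p+1` intermediate degree-`p`
extensions has `d(Q|P) = 2(p−1)` and `d(P'|Q) = 2(p−1)`, then `|G 0| = |G 1| = p²`,
`G 2 = ⊥`, and `d(P'|P) = 2(p² − 1)`. -/
theorem ramification_filtration_of_diamond (p : ℕ) (hp : p.Prime)
    (G : ℕ → AddSubgroup (ZMod p × ZMod p))
    (hanti : Antitone G)
    (hG0 : G 0 = ⊤)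
    (NN : ℕ) (hNN : G NN = ⊥)
    (dtot : ℕ)
    (hHilbert : dtot = ∑ i ∈ Finset.range NN, (Nat.card (G i) - 1))
    (hrelative : ∀ H : AddSubgroup (ZMod p × ZMod p), Nat.card H = p →
      ∑ i ∈ Finset.range NN, (Nat.card ↥(G i ⊓ H) - 1) = 2 * (p - 1))
    (hintermediate : ∀ H : AddSubgroup (ZMod p × ZMod p), Nat.card H = p →
      dtot = Nat.card ↥(G 0 ⊓ H) * (2 * (p - 1)) +
        ∑ i ∈ Finset.range NN, (Nat.card ↥(G i ⊓ H) - 1)) :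
    Nat.card (G 0) = p ^ 2 ∧ Nat.card (G 1) = p ^ 2 ∧ G 2 = ⊥ ∧
      dtot = 2 * (p ^ 2 - 1) := by
  haveI := Fact.mk hp
  have hp2 := hp.two_le
  have cardV : Nat.card (ZMod p × ZMod p) = p ^ 2 := by
    rw [Nat.card_prod, Nat.card_zmod, sq]
  have cardTop : Nat.card (⊤ : AddSubgroup (ZMod p × ZMod p)) = p ^ 2 := by
    rw [AddSubgroup.card_top, cardV]
  have hinf0 : ∀ H : AddSubgroup (ZMod p × ZMod p), G 0 ⊓ H = H := fun H => by
    rw [hG0, top_inf_eq]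
  -- two reference subgroups of order p
  have hx0 : ((1, 0) : ZMod p × ZMod p) ≠ 0 := by simp [Prod.ext_iff]
  have hx1 : ((0, 1) : ZMod p × ZMod p) ≠ 0 := by simp [Prod.ext_iff]
  set H0 := AddSubgroup.zmultiples ((1, 0) : ZMod p × ZMod p) with hH0def
  set H1 := AddSubgroup.zmultiples ((0, 1) : ZMod p × ZMod p) with hH1def
  have hH0 : Nat.card H0 = p := aux_zmul_card p hp _ hx0
  have hH1 : Nat.card H1 = p := aux_zmul_card p hp _ hx1
  have hH01 : H0 ≠ H1 := by
    intro h
    have hmem : ((0, 1) : ZMod p × ZMod p) ∈ H0 := h ▸ AddSubgroup.mem_zmultiples _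
    rw [hH0def, AddSubgroup.mem_zmultiples_iff] at hmem
    obtain ⟨n, hn⟩ := hmem
    rw [Prod.ext_iff] at hn
    simp at hn
  -- dtot value
  have hdval : dtot = 2 * (p ^ 2 - 1) := by
    have h := hintermediate H0 hH0
    rw [hinf0, hH0, hrelative _ hH0] at h
    obtain ⟨q, rfl⟩ : ∃ q, p = q + 1 := ⟨p - 1, (Nat.succ_pred_eq_of_pos hp.pos).symm⟩
    have e : (q + 1) ^ 2 = q ^ 2 + 2 * q + 1 := by ring
    rw [h, e]
    simp only [Nat.add_sub_cancel]
    ring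
  -- NN ≥ 1
  have hNN1 : 1 ≤ NN := by
    rcases Nat.eq_zero_or_pos NN with h0 | h
    · have := hrelative H0 hH0
      rw [h0, Finset.range_zero, Finset.sum_empty] at this
      omega
    · exact h
  -- For each H of order p, the i=0 term is p-1, so the tail is p-1
  -- G 1 = ⊤
  have hG1 : G 1 = ⊤ := by
    by_contra h1top
    -- first: |G 1| ≠ p^2
    have hcard1 : Nat.card (G 1) ≠ p ^ 2 := fun h => h1top
      (AddSubgroup.eq_top_of_card_eq _ (h.trans cardV.symm))
    -- if G1 ⊓ H has card p then G 1 = H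
    have key : ∀ H : AddSubgroup (ZMod p × ZMod p), Nat.card H = p →
        Nat.card ↥(G 1 ⊓ H) = p → G 1 = H := by
      intro H hH hcap
      have h1 : G 1 ⊓ H = H :=
        AddSubgroup.eq_of_le_of_card_ge inf_le_right (by rw [hH, hcap])
      have hle : H ≤ G 1 := by rw [← h1]; exact inf_le_left
      have hdvd : Nat.card (G 1) ∣ p ^ 2 := cardTop ▸ AddSubgroup.card_dvd_of_le (le_top : G 1 ≤ ⊤)
      obtain ⟨k, hk2, hkeq⟩ := (Nat.dvd_prime_pow hp).mp hdvd
      interval_cases k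
      · -- card G1 = 1, but H ≤ G1 with card p : contradiction
        exfalso
        have := AddSubgroup.card_dvd_of_le hle
        rw [hH, hkeq] at this
        simp at this
        omega
      · exact (AddSubgroup.eq_of_le_of_card_ge hle (by rw [hH, hkeq, pow_one])).symm
      · exact absurd hkeq hcard1
    -- the card of G1 ⊓ H is 1 or p
    have dichot : ∀ H : AddSubgroup (ZMod p × ZMod p), Nat.card H = p →
        Nat.card ↥(G 1 ⊓ H) = 1 ∨ Nat.card ↥(G 1 ⊓ H) = p := by
      intro H hH
      have := AddSubgroup.card_dvd_of_le (inf_le_right : G 1 ⊓ H ≤ H)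
      rw [hH] at this
      exact (Nat.dvd_prime hp).mp this
    -- pick H with trivial intersection
    obtain ⟨H, hH, hcap⟩ : ∃ H : AddSubgroup (ZMod p × ZMod p),
        Nat.card H = p ∧ Nat.card ↥(G 1 ⊓ H) = 1 := by
      rcases dichot H0 hH0 with h | h
      · exact ⟨H0, hH0, h⟩
      rcases dichot H1 hH1 with h' | h'
      · exact ⟨H1, hH1, h'⟩
      exact absurd ((key H0 hH0 h).symm.trans (key H1 hH1 h')) hH01
    have hbot : G 1 ⊓ H = ⊥ := by
      rwa [AddSubgroup.card_eq_one] at hcap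
    -- sum collapses to first term
    have hsum := hrelative H hH
    rw [Finset.sum_eq_single_of_mem 0 (Finset.mem_range.mpr hNN1)
      (fun b _ hb => by
        have hle : G b ⊓ H ≤ G 1 ⊓ H := inf_le_inf_right _ (hanti (by omega))
        rw [hbot, le_bot_iff] at hle
        simp [hle, AddSubgroup.card_bot])] at hsum
    rw [hinf0, hH] at hsum
    omega
  -- G 2 = ⊥
  have hG2 : G 2 = ⊥ := by
    by_contra h2
    obtain ⟨x, hxG, hxne⟩ : ∃ x, x ∈ G 2 ∧ x ≠ 0 := by
      by_contra hall
      push_neg at hall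
      exact h2 ((AddSubgroup.eq_bot_iff_forall _).mpr hall)
    set H := AddSubgroup.zmultiples x with hHdef
    have hH : Nat.card H = p := aux_zmul_card p hp _ hxne
    have hle2 : H ≤ G 2 := by
      rw [hHdef, AddSubgroup.zmultiples_le]
      exact hxG
    have hNN3 : 3 ≤ NN := by
      by_contra h
      have : NN ≤ 2 := by omega
      have := (hanti this).trans_eq hNN
      exact h2 (le_bot_iff.mp this)
    have hsub : Finset.range 3 ⊆ Finset.range NN := Finset.range_subset_range.mpr hNN3
    have hmono := Finset.sum_le_sum_of_subset (f := fun i => Nat.card ↥(G i ⊓ H) - 1) hsub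
    rw [hrelative H hH] at hmono
    have e0 : G 0 ⊓ H = H := hinf0 H
    have e1 : G 1 ⊓ H = H := by rw [hG1, top_inf_eq]
    have e2 : G 2 ⊓ H = H := inf_eq_right.mpr hle2
    rw [Finset.sum_range_succ, Finset.sum_range_succ, Finset.sum_range_one,
      e0, e1, e2, hH] at hmono
    omega
  refine ⟨by rw [hG0, cardTop], by rw [hG1, cardTop], hG2, hdval⟩
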